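/- Let $m \geq 2$ and let $a \in \mathbb{R}_{\geq 0}^m$ with $a_1 \geq a_2 \geq \cdots \geq a_m \geq 0$ and $a_1 + a_2 \leq 2$. If $\prod_{i=1}^m (1 + a_i) \leq 3\left(2 - \frac{1}{m-1}\right)$, then $\sum_{i=1}^m a_i \leq 3 - \frac{1}{m-1}$. -/
import Mathlib

open Finset

private lemma sum_sq_le_sq_sum {ι : Type*} (s : Finset ι) (f : ι → ℝ)
    (hf : ∀ i ∈ s, 0 ≤ f i) : ∑ i ∈ s, (f i)^2 ≤ (∑ i ∈ s, f i)^2 := by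
  have h : ∀ i ∈ s, (f i)^2 ≤ f i * ∑ j ∈ s, f j := by
    intro i hi
    have h1 : f i ≤ ∑ j ∈ s, f j := Finset.single_le_sum hf hi
    nlinarith [hf i hi]
  calc ∑ i ∈ s, (f i)^2 ≤ ∑ i ∈ s, f i * ∑ j ∈ s, f j := Finset.sum_le_sum h
    _ = (∑ i ∈ s, f i)^2 := by rw [← Finset.sum_mul]; ring

private lemma prod_one_add_ge {ι : Type*} (s : Finset ι) (f : ι → ℝ)
    (hf : ∀ i ∈ s, 0 ≤ f i) :
    1 + (∑ i ∈ s, f i) + ((∑ i ∈ s, f i)^2 - ∑ i ∈ s, (f i)^2)/2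
      ≤ ∏ i ∈ s, (1 + f i) := by
  induction s using Finset.cons_induction with
  | empty => simp
  | cons b s' hb ih =>
    have hf' : ∀ i ∈ s', 0 ≤ f i := fun i hi => hf i (Finset.mem_cons_of_mem hi)
    have hb0 : 0 ≤ f b := hf b (Finset.mem_cons_self b s')
    have ihs := ih hf'
    have hEQ := sum_sq_le_sq_sum s' f hf'
    have hE : 0 ≤ ∑ i ∈ s', f i := Finset.sum_nonneg hf'
    rw [Finset.prod_cons, Finset.sum_cons, Finset.sum_cons]
    set E := ∑ i ∈ s', f i
    set Q := ∑ i ∈ s', (f i)^2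
    have : (1 + f b) * (1 + E + (E^2 - Q)/2) ≤ (1 + f b) * ∏ i ∈ s', (1 + f i) :=
      mul_le_mul_of_nonneg_left ihs (by linarith)
    nlinarith [this]

theorem Vm_subset_Cm {m : ℕ} (hm : 2 ≤ m) (a : Fin m → ℝ)
    (h0 : ∀ i, 0 ≤ a i) (hsort : Antitone a)
    (h12 : a ⟨0, by omega⟩ + a ⟨1, by omega⟩ ≤ 2)
    (hprod : ∏ i, (1 + a i) ≤ 3 * (2 - 1 / ((m : ℝ) - 1))) :
    ∑ i, a i ≤ 3 - 1 / ((m : ℝ) - 1) := by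
  set i0 : Fin m := ⟨0, by omega⟩
  set i1 : Fin m := ⟨1, by omega⟩
  have hne : i1 ≠ i0 := by simp [i0, i1, Fin.ext_iff]
  set s : Finset (Fin m) := Finset.univ.erase i0 with hs
  have hi1s : i1 ∈ s := Finset.mem_erase.mpr ⟨hne, Finset.mem_univ _⟩
  set x := a i0
  set y := a i1
  set T := ∑ i ∈ s, a i with hT
  set Q := ∑ i ∈ s, (a i)^2 with hQ
  have htail : ∀ i ∈ s, a i ≤ y := by
    intro i hi
    have : i ≠ i0 := (Finset.mem_erase.mp hi).1
    have h1 : i1 ≤ i := by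
      rw [Fin.le_def]
      have : i.val ≠ 0 := fun h => this (Fin.ext h)
      simp [i1]; omega
    exact hsort h1
  have hQle : Q ≤ y * T := by
    rw [hQ, hT, Finset.mul_sum]
    refine Finset.sum_le_sum fun i hi => ?_
    have := htail i hi
    nlinarith [h0 i]
  have hsplit : ∏ i, (1 + a i) = (1 + x) * ∏ i ∈ s, (1 + a i) :=
    (Finset.mul_prod_erase _ _ (Finset.mem_univ i0)).symm
  have hsumsplit : ∑ i, a i = x + T :=
    (Finset.add_sum_erase _ _ (Finset.mem_univ i0)).symm
  have htp := prod_one_add_ge s a (fun i _ => h0 i)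
  have hx0 : 0 ≤ x := h0 i0
  have hy0 : 0 ≤ y := h0 i1
  have hyx : y ≤ x := hsort (by simp [Fin.le_def, i0, i1])
  have hyT : y ≤ T := Finset.single_le_sum (f := a) (fun i _ => h0 i) hi1s
  have key : (1 + x) * (1 + T + (T^2 - y*T)/2) ≤ 3 * (2 - 1/((m:ℝ)-1)) := by
    calc (1 + x) * (1 + T + (T^2 - y*T)/2)
        ≤ (1 + x) * (1 + T + (T^2 - Q)/2) := by
          apply mul_le_mul_of_nonneg_left (by linarith) (by linarith)
      _ ≤ (1 + x) * ∏ i ∈ s, (1 + a i) :=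
          mul_le_mul_of_nonneg_left htp (by linarith)
      _ = ∏ i, (1 + a i) := hsplit.symm
      _ ≤ _ := hprod
  rw [hsumsplit]
  set t := 1/((m:ℝ)-1) with htdef
  nlinarith [sq_nonneg (x+T-3+t), sq_nonneg (T-1), sq_nonneg (x-2),
    mul_nonneg hy0 (le_trans hy0 hyT), sq_nonneg (x+T-2),
    mul_nonneg (le_trans hy0 hyx) (le_trans hy0 hyT), h12, key]
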